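/- There exist absolute constants c > 0 and C > 0 such that for all exponents 1 ≤ q ≤ p ≤ ∞ and 1 ≤ σ ≤ θ ≤ ∞, all m, k ∈ ℕ, and all n ∈ ℤ_+ with n ≤ mk/2, one has c · m^{1/q−1/p} k^{1/σ−1/θ} ≤ d_n(B^{m,k}_{p,θ}, l^{m,k}_{q,σ}) ≤ C · m^{1/q−1/p} k^{1/σ−1/θ} (with the convention 1/∞ = 0). -/

import Mathlib

open scoped ENNReal NNReal BigOperators Pointwise

noncomputable section

def lNorm (s : ℝ≥0∞) {ι : Type*} [Fintype ι] (x : ι → ℝ) : ℝ :=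
  if s = ∞ then ⨆ i, |x i| else (∑ i, |x i| ^ s.toReal) ^ (1 / s.toReal)

def mixedNorm (p θ : ℝ≥0∞) {m k : ℕ} (x : Fin m → Fin k → ℝ) : ℝ :=
  lNorm θ fun j => lNorm p fun i => x i j

def mixedBall (m k : ℕ) (p θ : ℝ≥0∞) : Set (Fin m → Fin k → ℝ) :=
  {x | mixedNorm p θ x ≤ 1}

def kolWidth (m k n : ℕ) (M : Set (Fin m → Fin k → ℝ)) (q σ : ℝ≥0∞) : ℝ :=
  ⨅ L : {L : Submodule ℝ (Fin m → Fin k → ℝ) // Module.finrank ℝ L ≤ n},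
    ⨆ x : M, ⨅ y : L.1,
      mixedNorm q σ ((x : Fin m → Fin k → ℝ) - (y : Fin m → Fin k → ℝ))

def ir (p : ℝ≥0∞) : ℝ := p⁻¹.toReal

def omegaE (p q : ℝ≥0∞) : ℝ :=
  if q = 2 then 1 else min ((ir p - ir q) / (1 / 2 - ir q)) 1

def expOf (t : ℝ) : ℝ≥0∞ := (ENNReal.ofReal t)⁻¹

def Phi (q σ : ℝ≥0∞) (m k n : ℕ) (p θ : ℝ≥0∞) : ℝ≥0∞ :=
  let M : ℝ≥0∞ := m
  let K : ℝ≥0∞ := k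
  let W : ℝ≥0∞ := ((n : ℝ≥0∞))⁻¹ ^ ((1 : ℝ) / 2) * M ^ ir q * K ^ ir σ
  let Wm : ℝ≥0∞ := ((n : ℝ≥0∞))⁻¹ ^ ((1 : ℝ) / 2) * M ^ ((1 : ℝ) / 2) * K ^ ir σ
  let Wk : ℝ≥0∞ := ((n : ℝ≥0∞))⁻¹ ^ ((1 : ℝ) / 2) * M ^ ir q * K ^ ((1 : ℝ) / 2)
  if q ≤ p then
    if σ ≤ θ then
      M ^ (ir q - ir p) * K ^ (ir σ - ir θ)
    else
      min (M ^ (ir q - ir p)) (M ^ (ir q - ir p) * Wm ^ omegaE θ σ)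
  else if σ ≤ θ then
    min (K ^ (ir σ - ir θ)) (K ^ (ir σ - ir θ) * Wk ^ omegaE p q)
  else if p ≤ 2 ∧ θ ≤ 2 then
    min 1 W
  else if omegaE p q ≤ omegaE θ σ then
    min (min 1 (W ^ omegaE p q)) (M ^ (ir q - ir p) * Wm ^ omegaE θ σ)
  else
    min (min 1 (W ^ omegaE θ σ)) (K ^ (ir σ - ir θ) * Wk ^ omegaE p q)

/-- `Ψ₀ = inf_{α ∈ A} ν_α Φ(p_α, θ_α)`. -/
def Psi0 {A : Type*} (q σ : ℝ≥0∞) (m k n : ℕ) (p θ : A → ℝ≥0∞) (ν : A → ℝ) : ℝ≥0∞ :=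
  ⨅ a : A, ENNReal.ofReal (ν a) * Phi q σ m k n (p a) (θ a)

/-- `Ψ₁`: infimum over pairs `(α, β) ∈ N₁`, i.e. `p_α ≠ q` and
`1/q = (1−λ)/p_α + λ/p_β` for some `λ ∈ (0,1)`, of
`ν_α^{1−λ} ν_β^{λ} Φ(q, θ̂_{α,β})` where `1/θ̂_{α,β} = (1−λ)/θ_α + λ/θ_β`. -/
def Psi1 {A : Type*} (q σ : ℝ≥0∞) (m k n : ℕ) (p θ : A → ℝ≥0∞) (ν : A → ℝ) : ℝ≥0∞ :=
  ⨅ (a : A) (b : A) (lam : ℝ)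
    (_ : 0 < lam ∧ lam < 1 ∧ p a ≠ q ∧
      ir q = (1 - lam) * ir (p a) + lam * ir (p b)),
    ENNReal.ofReal (ν a) ^ (1 - lam) * ENNReal.ofReal (ν b) ^ lam *
      Phi q σ m k n q (expOf ((1 - lam) * ir (θ a) + lam * ir (θ b)))

/-- `Ψ₂`: infimum over `(α, β) ∈ N₂` of `ν_α^{1−μ} ν_β^{μ} Φ(p̂_{α,β}, σ)`. -/
def Psi2 {A : Type*} (q σ : ℝ≥0∞) (m k n : ℕ) (p θ : A → ℝ≥0∞) (ν : A → ℝ) : ℝ≥0∞ :=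
  ⨅ (a : A) (b : A) (lam : ℝ)
    (_ : 0 < lam ∧ lam < 1 ∧ θ a ≠ σ ∧
      ir σ = (1 - lam) * ir (θ a) + lam * ir (θ b)),
    ENNReal.ofReal (ν a) ^ (1 - lam) * ENNReal.ofReal (ν b) ^ lam *
      Phi q σ m k n (expOf ((1 - lam) * ir (p a) + lam * ir (p b))) σ

/-- `Ψ₃`: infimum over `(α, β) ∈ N₃` of `ν_α^{1−λ} ν_β^{λ} Φ(2, θ̃_{α,β})`. -/
def Psi3 {A : Type*} (q σ : ℝ≥0∞) (m k n : ℕ) (p θ : A → ℝ≥0∞) (ν : A → ℝ) : ℝ≥0∞ :=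
  ⨅ (a : A) (b : A) (lam : ℝ)
    (_ : 0 < lam ∧ lam < 1 ∧ p a ≠ 2 ∧
      (1 : ℝ) / 2 = (1 - lam) * ir (p a) + lam * ir (p b)),
    ENNReal.ofReal (ν a) ^ (1 - lam) * ENNReal.ofReal (ν b) ^ lam *
      Phi q σ m k n 2 (expOf ((1 - lam) * ir (θ a) + lam * ir (θ b)))

/-- `Ψ₄`: infimum over `(α, β) ∈ N₄` of `ν_α^{1−μ} ν_β^{μ} Φ(p̃_{α,β}, 2)`. -/
def Psi4 {A : Type*} (q σ : ℝ≥0∞) (m k n : ℕ) (p θ : A → ℝ≥0∞) (ν : A → ℝ) : ℝ≥0∞ :=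
  ⨅ (a : A) (b : A) (lam : ℝ)
    (_ : 0 < lam ∧ lam < 1 ∧ θ a ≠ 2 ∧
      (1 : ℝ) / 2 = (1 - lam) * ir (θ a) + lam * ir (θ b)),
    ENNReal.ofReal (ν a) ^ (1 - lam) * ENNReal.ofReal (ν b) ^ lam *
      Phi q σ m k n (expOf ((1 - lam) * ir (p a) + lam * ir (p b))) 2

/-- `Ψ₅`: infimum over `(α, β) ∈ N₅`, i.e. such that for some `λ ∈ (0,1)` the
interpolated exponents satisfy `p_{α,β} ∈ (2,q)`, `θ_{α,β} ∈ (2,σ)`, lie on the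
"critical line", while `(1/p_α, 1/θ_α)` does not, of
`ν_α^{1−λ} ν_β^{λ} Φ(p_{α,β}, θ_{α,β})`. -/
def Psi5 {A : Type*} (q σ : ℝ≥0∞) (m k n : ℕ) (p θ : A → ℝ≥0∞) (ν : A → ℝ) : ℝ≥0∞ :=
  ⨅ (a : A) (b : A) (lam : ℝ)
    (_ : 0 < lam ∧ lam < 1 ∧
      ir q < (1 - lam) * ir (p a) + lam * ir (p b) ∧
      (1 - lam) * ir (p a) + lam * ir (p b) < 1 / 2 ∧
      ir σ < (1 - lam) * ir (θ a) + lam * ir (θ b) ∧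
      (1 - lam) * ir (θ a) + lam * ir (θ b) < 1 / 2 ∧
      ((1 - lam) * ir (p a) + lam * ir (p b) - ir q) / (1 / 2 - ir q) =
        ((1 - lam) * ir (θ a) + lam * ir (θ b) - ir σ) / (1 / 2 - ir σ) ∧
      (ir (p a) - ir q) / (1 / 2 - ir q) ≠ (ir (θ a) - ir σ) / (1 / 2 - ir σ)),
    ENNReal.ofReal (ν a) ^ (1 - lam) * ENNReal.ofReal (ν b) ^ lam *
      Phi q σ m k n (expOf ((1 - lam) * ir (p a) + lam * ir (p b)))
        (expOf ((1 - lam) * ir (θ a) + lam * ir (θ b)))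

/-- `Ψ₆`: infimum over triples `(α, β, γ) ∈ N₆` (with positive weights `τ` summing to `1`
interpolating `(1/q, 1/σ)`, the three points not collinear) of
`ν_α^{τ_α} ν_β^{τ_β} ν_γ^{τ_γ} Φ(q, σ)`. -/
def Psi6 {A : Type*} (q σ : ℝ≥0∞) (m k n : ℕ) (p θ : A → ℝ≥0∞) (ν : A → ℝ) : ℝ≥0∞ :=
  ⨅ (a : A) (b : A) (c : A) (ta : ℝ) (tb : ℝ) (tc : ℝ)
    (_ : 0 < ta ∧ 0 < tb ∧ 0 < tc ∧ ta + tb + tc = 1 ∧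
      ir q = ta * ir (p a) + tb * ir (p b) + tc * ir (p c) ∧
      ir σ = ta * ir (θ a) + tb * ir (θ b) + tc * ir (θ c) ∧
      (ir (p b) - ir (p a)) * (ir (θ c) - ir (θ a)) ≠
        (ir (p c) - ir (p a)) * (ir (θ b) - ir (θ a))),
    ENNReal.ofReal (ν a) ^ ta * ENNReal.ofReal (ν b) ^ tb * ENNReal.ofReal (ν c) ^ tc *
      Phi q σ m k n q σ

/-- `Ψ₇`: as `Ψ₆`, with `(1/2, 1/2)` in place of `(1/q, 1/σ)`. -/
def Psi7 {A : Type*} (q σ : ℝ≥0∞) (m k n : ℕ) (p θ : A → ℝ≥0∞) (ν : A → ℝ) : ℝ≥0∞ :=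
  ⨅ (a : A) (b : A) (c : A) (ta : ℝ) (tb : ℝ) (tc : ℝ)
    (_ : 0 < ta ∧ 0 < tb ∧ 0 < tc ∧ ta + tb + tc = 1 ∧
      (1 : ℝ) / 2 = ta * ir (p a) + tb * ir (p b) + tc * ir (p c) ∧
      (1 : ℝ) / 2 = ta * ir (θ a) + tb * ir (θ b) + tc * ir (θ c) ∧
      (ir (p b) - ir (p a)) * (ir (θ c) - ir (θ a)) ≠
        (ir (p c) - ir (p a)) * (ir (θ b) - ir (θ a))),
    ENNReal.ofReal (ν a) ^ ta * ENNReal.ofReal (ν b) ^ tb * ENNReal.ofReal (ν c) ^ tc *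
      Phi q σ m k n 2 2

/-- `min_{0 ≤ j ≤ 7} Ψ_j`. -/
def PsiMin {A : Type*} (q σ : ℝ≥0∞) (m k n : ℕ) (p θ : A → ℝ≥0∞) (ν : A → ℝ) : ℝ≥0∞ :=
  Psi0 q σ m k n p θ ν ⊓ Psi1 q σ m k n p θ ν ⊓ Psi2 q σ m k n p θ ν ⊓
    Psi3 q σ m k n p θ ν ⊓ Psi4 q σ m k n p θ ν ⊓ Psi5 q σ m k n p θ ν ⊓
    Psi6 q σ m k n p θ ν ⊓ Psi7 q σ m k n p θ ν

/-- The set `V^{m,k}_{r,l}`: the convex hull of all `γ(e)`, where `e` is the 0/1 matrix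
supported on the first `r` rows and first `l` columns and `γ` ranges over all
permutations of rows/columns composed with sign changes of rows/columns. -/
def Vset (m k r l : ℕ) : Set (Fin m → Fin k → ℝ) :=
  convexHull ℝ {y | ∃ (t₁ : Equiv.Perm (Fin m)) (t₂ : Equiv.Perm (Fin k))
      (e₁ : Fin m → ℝ) (e₂ : Fin k → ℝ),
    (∀ i, e₁ i = 1 ∨ e₁ i = -1) ∧ (∀ j, e₂ j = 1 ∨ e₂ j = -1) ∧
    y = fun i j => e₁ i * e₂ j * (if (t₁ i : ℕ) < r ∧ (t₂ j : ℕ) < l then 1 else 0)}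




-- Auxiliary lemmas
lemma ir_eq (s : ℝ≥0∞) : ir s = s.toReal⁻¹ := ENNReal.toReal_inv s

lemma lNorm_nonneg (s : ℝ≥0∞) {ι : Type*} [Fintype ι] (x : ι → ℝ) : 0 ≤ lNorm s x := by
  unfold lNorm
  split
  · exact Real.iSup_nonneg fun i => abs_nonneg _
  · exact Real.rpow_nonneg
      (Finset.sum_nonneg fun i _ => Real.rpow_nonneg (abs_nonneg _) _) _

lemma lNorm_mono {s : ℝ≥0∞} {ι : Type*} [Fintype ι] {x y : ι → ℝ}
    (h : ∀ i, |x i| ≤ |y i|) : lNorm s x ≤ lNorm s y := by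
  unfold lNorm
  split
  · exact Real.iSup_le (fun i => le_trans (h i)
      (le_ciSup (f := fun i => |y i|) (Set.Finite.bddAbove (Set.finite_range _)) i))
      (Real.iSup_nonneg fun i => abs_nonneg _)
  · refine Real.rpow_le_rpow (Finset.sum_nonneg fun i _ => Real.rpow_nonneg (abs_nonneg _) _)
      (Finset.sum_le_sum fun i _ => Real.rpow_le_rpow (abs_nonneg _) (h i) ENNReal.toReal_nonneg)
      (by positivity)

lemma lNorm_smul {s : ℝ≥0∞} (hs : 1 ≤ s) {ι : Type*} [Fintype ι] {c : ℝ} (hc : 0 ≤ c)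
    (x : ι → ℝ) : lNorm s (fun i => c * x i) = c * lNorm s x := by
  unfold lNorm
  split
  · simp only [abs_mul, abs_of_nonneg hc]
    exact (Real.mul_iSup_of_nonneg hc _).symm
  · rename_i hstop
    have ht : 0 < s.toReal := ENNReal.toReal_pos (by intro h; rw [h] at hs; simp at hs) hstop
    have h1 : ∀ i : ι, |c * x i| ^ s.toReal = c ^ s.toReal * |x i| ^ s.toReal := by
      intro i
      rw [abs_mul, abs_of_nonneg hc, Real.mul_rpow hc (abs_nonneg _)]
    simp only [h1, ← Finset.mul_sum]
    rw [Real.mul_rpow (Real.rpow_nonneg hc _)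
        (Finset.sum_nonneg fun i _ => Real.rpow_nonneg (abs_nonneg _) _),
      ← Real.rpow_mul hc, mul_one_div_cancel ht.ne', Real.rpow_one]

lemma sum_rpow_le {ι : Type*} [Fintype ι] [Nonempty ι] (f : ι → ℝ) (hf : ∀ i, 0 ≤ f i)
    {t u : ℝ} (ht : 1 ≤ t) (htu : t ≤ u) :
    (∑ i, f i ^ t) ^ (1/t) ≤ (Fintype.card ι : ℝ) ^ (1/t - 1/u) * (∑ i, f i ^ u) ^ (1/u) := by
  have ht0 : 0 < t := lt_of_lt_of_le one_pos ht
  have hu0 : 0 < u := lt_of_lt_of_le ht0 htu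
  have hN : (0:ℝ) < Fintype.card ι := by
    have := Fintype.card_pos (α := ι); positivity
  have hr : 1 ≤ u / t := (one_le_div ht0).2 htu
  have key := Real.rpow_arith_mean_le_arith_mean_rpow Finset.univ
      (fun _ : ι => ((Fintype.card ι : ℝ))⁻¹) (fun i => f i ^ t)
      (fun i _ => by positivity)
      (by rw [Finset.sum_const, Finset.card_univ, nsmul_eq_mul, mul_inv_cancel₀ hN.ne'])
      (fun i _ => Real.rpow_nonneg (hf i) _) hr
  have hz : ∀ i : ι, (f i ^ t) ^ (u / t) = f i ^ u := by
    intro i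
    rw [← Real.rpow_mul (hf i)]
    congr 1
    field_simp
  simp only [hz, ← Finset.mul_sum] at key
  -- key : ((card)⁻¹ * ∑ f^t) ^ (u/t) ≤ (card)⁻¹ * ∑ f^u
  have hSt : 0 ≤ ∑ i, f i ^ t := Finset.sum_nonneg fun i _ => Real.rpow_nonneg (hf i) _
  have hSu : 0 ≤ ∑ i, f i ^ u := Finset.sum_nonneg fun i _ => Real.rpow_nonneg (hf i) _
  have hNinv : (0:ℝ) ≤ ((Fintype.card ι : ℝ))⁻¹ := inv_nonneg.2 hN.le
  have key2 := Real.rpow_le_rpow (Real.rpow_nonneg (mul_nonneg hNinv hSt) _) key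
      (le_of_lt (one_div_pos.2 hu0))
  have hexp : (u/t) * (1/u) = 1/t := by field_simp
  rw [← Real.rpow_mul (mul_nonneg hNinv hSt), hexp] at key2
  rw [Real.mul_rpow hNinv hSt, Real.mul_rpow hNinv hSu] at key2
  -- key2 : N⁻¹ ^ (1/t) * St ^ (1/t) ≤ N⁻¹ ^ (1/u) * Su ^ (1/u)
  have h3 : (∑ i, f i ^ t) ^ (1/t)
      ≤ ((Fintype.card ι : ℝ) ^ (1/t)) * (((Fintype.card ι : ℝ))⁻¹ ^ (1/u) * (∑ i, f i ^ u) ^ (1/u)) := by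
    calc (∑ i, f i ^ t) ^ (1/t)
        = ((Fintype.card ι : ℝ) ^ (1/t)) * (((Fintype.card ι : ℝ))⁻¹ ^ (1/t) * (∑ i, f i ^ t) ^ (1/t)) := by
          rw [← mul_assoc, ← Real.mul_rpow hN.le (by positivity), mul_inv_cancel₀ hN.ne',
            Real.one_rpow, one_mul]
      _ ≤ _ := by
          exact mul_le_mul_of_nonneg_left key2 (Real.rpow_nonneg hN.le _)
  calc (∑ i, f i ^ t) ^ (1/t) ≤ _ := h3
    _ = (Fintype.card ι : ℝ) ^ (1/t - 1/u) * (∑ i, f i ^ u) ^ (1/u) := by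
        rw [← mul_assoc, Real.inv_rpow hN.le, ← Real.rpow_neg hN.le, ← Real.rpow_add hN,
          ← sub_eq_add_neg]

lemma lNorm_holder {ι : Type*} [Fintype ι] [Nonempty ι] {q p : ℝ≥0∞}
    (hq : 1 ≤ q) (hqp : q ≤ p) (x : ι → ℝ) :
    lNorm q x ≤ (Fintype.card ι : ℝ) ^ (ir q - ir p) * lNorm p x := by
  have hN : (0:ℝ) < Fintype.card ι := by
    have := Fintype.card_pos (α := ι); positivity
  by_cases hp : p = ∞
  · subst hp
    by_cases hqi : q = ∞
    · subst hqi
      simp [ir, lNorm]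
    · have ht : 1 ≤ q.toReal := by
        have := ENNReal.toReal_mono hqi hq
        simpa using this
      have ht0 : 0 < q.toReal := lt_of_lt_of_le one_pos ht
      have hMnn : 0 ≤ lNorm ∞ x := lNorm_nonneg _ _
      have hle : ∀ i, |x i| ≤ lNorm ∞ x := by
        intro i
        unfold lNorm
        rw [if_pos rfl]
        exact le_ciSup (f := fun i => |x i|) (Set.Finite.bddAbove (Set.finite_range _)) i
      unfold lNorm
      rw [if_neg hqi]
      have hsum : ∑ i, |x i| ^ q.toReal ≤ (Fintype.card ι : ℝ) * lNorm ∞ x ^ q.toReal := by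
        calc ∑ i, |x i| ^ q.toReal ≤ ∑ _i : ι, lNorm ∞ x ^ q.toReal :=
              Finset.sum_le_sum fun i _ =>
                Real.rpow_le_rpow (abs_nonneg _) (hle i) ht0.le
          _ = (Fintype.card ι : ℝ) * lNorm ∞ x ^ q.toReal := by
              rw [Finset.sum_const, Finset.card_univ, nsmul_eq_mul]
      calc (∑ i, |x i| ^ q.toReal) ^ (1 / q.toReal)
          ≤ ((Fintype.card ι : ℝ) * lNorm ∞ x ^ q.toReal) ^ (1 / q.toReal) :=
            Real.rpow_le_rpow (Finset.sum_nonneg fun i _ => Real.rpow_nonneg (abs_nonneg _) _)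
              hsum (by positivity)
        _ = (Fintype.card ι : ℝ) ^ (1 / q.toReal) * lNorm ∞ x := by
            rw [Real.mul_rpow hN.le (Real.rpow_nonneg hMnn _), ← Real.rpow_mul hMnn,
              mul_one_div_cancel ht0.ne', Real.rpow_one]
        _ = (Fintype.card ι : ℝ) ^ (ir q - ir ⊤) * lNorm ∞ x := by
            rw [ir_eq, ir_eq]
            norm_num
  · have hqi : q ≠ ∞ := ne_top_of_le_ne_top hp hqp
    have ht : 1 ≤ q.toReal := by
      have := ENNReal.toReal_mono hqi hq; simpa using this
    have htu : q.toReal ≤ p.toReal := ENNReal.toReal_mono hp hqp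
    unfold lNorm
    rw [if_neg hqi, if_neg hp]
    have := sum_rpow_le (fun i => |x i|) (fun i => abs_nonneg _) ht htu
    rw [ir_eq, ir_eq, ← one_div, ← one_div]
    exact this

lemma lNorm_one_eq {ι : Type*} [Fintype ι] (x : ι → ℝ) : lNorm 1 x = ∑ i, |x i| := by
  unfold lNorm
  rw [if_neg ENNReal.one_ne_top]
  simp

lemma sum_abs_le_lNorm {ι : Type*} [Fintype ι] [Nonempty ι] {s : ℝ≥0∞} (hs : 1 ≤ s)
    (x : ι → ℝ) :
    (Fintype.card ι : ℝ) ^ (ir s - 1) * ∑ i, |x i| ≤ lNorm s x := by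
  have hN : (0:ℝ) < Fintype.card ι := by
    have := Fintype.card_pos (α := ι); positivity
  have h := lNorm_holder (q := 1) (p := s) le_rfl hs x
  rw [lNorm_one_eq] at h
  have hir1 : ir 1 = 1 := by simp [ir]
  rw [hir1] at h
  calc (Fintype.card ι : ℝ) ^ (ir s - 1) * ∑ i, |x i|
      ≤ (Fintype.card ι : ℝ) ^ (ir s - 1) * ((Fintype.card ι : ℝ) ^ (1 - ir s) * lNorm s x) :=
        mul_le_mul_of_nonneg_left h (Real.rpow_nonneg hN.le _)
    _ = lNorm s x := by
        rw [← mul_assoc, ← Real.rpow_add hN]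
        norm_num

lemma lNorm_sign_le {ι : Type*} [Fintype ι] {s : ℝ≥0∞} (hs : 1 ≤ s) {e : ι → ℝ}
    (he : ∀ i, |e i| = 1) : lNorm s e ≤ (Fintype.card ι : ℝ) ^ (ir s) := by
  unfold lNorm
  split
  · rename_i h
    subst h
    rw [show ir ∞ = 0 by simp [ir], Real.rpow_zero]
    exact Real.iSup_le (fun i => (he i).le) zero_le_one
  · rename_i hstop
    have ht0 : 0 < s.toReal := ENNReal.toReal_pos (by intro h; rw [h] at hs; simp at hs) hstop
    simp only [he, Real.one_rpow]
    rw [Finset.sum_const, Finset.card_univ, nsmul_eq_mul, mul_one, ir_eq, ← one_div]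

lemma exists_sign_active {ι : Type*} [Fintype ι] (V : Submodule ℝ (ι → ℝ)) :
    ∃ g ∈ V, (∀ i, |g i| ≤ 1) ∧ (Module.finrank ℝ V : ℝ) ≤ ∑ i, |g i| := by
  classical
  suffices h : ∀ c : ℕ, ∀ g ∈ V, (∀ i, |g i| ≤ 1) →
      Fintype.card ι ≤ c + (Finset.univ.filter fun i => |g i| = 1).card →
      ∃ g' ∈ V, (∀ i, |g' i| ≤ 1) ∧
        Module.finrank ℝ V ≤ (Finset.univ.filter fun i => |g' i| = 1).card by
    obtain ⟨g', hg'V, hg'le, hcard⟩ := h (Fintype.card ι) 0 V.zero_mem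
      (by intro i; simp) (by omega)
    refine ⟨g', hg'V, hg'le, ?_⟩
    have h2 : ((Finset.univ.filter fun i => |g' i| = 1).card : ℝ) ≤ ∑ i, |g' i| := by
      calc ((Finset.univ.filter fun i => |g' i| = 1).card : ℝ)
          = ∑ i ∈ Finset.univ.filter (fun i => |g' i| = 1), |g' i| := by
            rw [Finset.sum_congr rfl (fun i hi => (Finset.mem_filter.1 hi).2)]
            simp
        _ ≤ ∑ i, |g' i| :=
            Finset.sum_le_sum_of_subset_of_nonneg (Finset.filter_subset _ _)
              (fun i _ _ => abs_nonneg _)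
    exact le_trans (Nat.cast_le.2 hcard) h2
  intro c
  induction c with
  | zero =>
    intro g hgV hgle hcard
    refine ⟨g, hgV, hgle, ?_⟩
    have h1 : Module.finrank ℝ V ≤ Module.finrank ℝ (ι → ℝ) := V.finrank_le
    have h2 : Module.finrank ℝ (ι → ℝ) = Fintype.card ι := by
      simp [Module.finrank_pi]
    omega
  | succ c ih =>
    intro g hgV hgle hcard
    set S := Finset.univ.filter fun i => |g i| = 1 with hS
    by_cases hdone : Module.finrank ℝ V ≤ S.card
    · exact ⟨g, hgV, hgle, hdone⟩
    push_neg at hdone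
    -- find nonzero h ∈ V vanishing on S
    set φ : V →ₗ[ℝ] ({ i // i ∈ S } → ℝ) :=
      LinearMap.pi (fun i => (LinearMap.proj (i : ι)).comp V.subtype) with hφ
    have hnotinj : ¬ Function.Injective φ := by
      intro hinj
      have := LinearMap.finrank_le_finrank_of_injective hinj
      rw [Module.finrank_pi, Fintype.card_coe] at this
      omega
    rw [← LinearMap.ker_eq_bot] at hnotinj
    obtain ⟨⟨h, hhV⟩, hker, hne⟩ := Submodule.exists_mem_ne_zero_of_ne_bot hnotinj
    have hh0 : h ≠ 0 := by
      intro h0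
      apply hne
      ext
      simp [h0]
    have hhS : ∀ i ∈ S, h i = 0 := by
      intro i hi
      have := congr_fun (show φ ⟨h, hhV⟩ = 0 from hker) ⟨i, hi⟩
      simpa [hφ] using this
    -- support of h
    have hT : (Finset.univ.filter fun i => h i ≠ 0).Nonempty := by
      by_contra hTe
      apply hh0
      ext i
      rw [Finset.not_nonempty_iff_eq_empty, Finset.filter_eq_empty_iff] at hTe
      have := hTe (Finset.mem_univ i)
      simpa using this
    -- step data
    set sgn : ι → ℝ := fun i => if 0 < h i then 1 else -1 with hsgn
    set tf : ι → ℝ := fun i => (1 - g i * sgn i) / |h i| with htf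
    obtain ⟨i0, hi0T, hi0min⟩ := Finset.exists_min_image _ tf hT
    have hi0ne : h i0 ≠ 0 := (Finset.mem_filter.1 hi0T).2
    have hgS : ∀ i, h i ≠ 0 → |g i| < 1 := by
      intro i hi
      rcases lt_or_eq_of_le (hgle i) with h' | h'
      · exact h'
      · exact absurd (hhS i (Finset.mem_filter.2 ⟨Finset.mem_univ i, h'⟩)) hi
    have hsgn_abs : ∀ i, |sgn i| = 1 := by
      intro i
      simp only [hsgn]
      split <;> simp
    have htfpos : ∀ i, h i ≠ 0 → 0 < tf i := by
      intro i hi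
      apply div_pos
      · have : g i * sgn i ≤ |g i| := by
          calc g i * sgn i ≤ |g i * sgn i| := le_abs_self _
            _ = |g i| := by rw [abs_mul, hsgn_abs, mul_one]
        linarith [hgS i hi]
      · exact abs_pos.2 hi
    have hsgn_eq : ∀ i, h i ≠ 0 → h i / |h i| = sgn i := by
      intro i hi
      rcases lt_or_gt_of_ne hi with hlt | hgt
      · simp only [hsgn, if_neg (not_lt.2 hlt.le)]
        rw [abs_of_neg hlt, div_neg, div_self hi]
      · simp only [hsgn, if_pos hgt]
        rw [abs_of_pos hgt, div_self hi]
    have hval : ∀ i, h i ≠ 0 → g i + tf i * h i = sgn i := by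
      intro i hi
      have hstep : tf i * h i = (1 - g i * sgn i) * (h i / |h i|) := by
        simp only [htf]; ring
      rw [hstep, hsgn_eq i hi]
      have h2 : sgn i * sgn i = 1 := by
        simp only [hsgn]; split <;> norm_num
      linear_combination (-(g i)) * h2
    set t := tf i0 with ht
    have htpos : 0 < t := htfpos i0 hi0ne
    set g' : ι → ℝ := g + t • h with hg'
    have hg'V : g' ∈ V := V.add_mem hgV (V.smul_mem t hhV)
    have hg'app : ∀ i, g' i = g i + t * h i := by
      intro i; simp [hg']
    have hbound : ∀ i, |g' i| ≤ 1 := by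
      intro i
      by_cases hi : h i = 0
      · rw [hg'app, hi, mul_zero, add_zero]; exact hgle i
      · have hti : t ≤ tf i := hi0min i (Finset.mem_filter.2 ⟨Finset.mem_univ i, hi⟩)
        have hgl := abs_le.1 (hgle i)
        rw [hg'app, abs_le]
        rcases lt_or_gt_of_ne hi with hlt | hgt
        · have hsv : sgn i = -1 := by simp only [hsgn, if_neg (not_lt.2 hlt.le)]
          have hev : g i + tf i * h i = -1 := by rw [hval i hi, hsv]
          have hm : tf i * h i ≤ t * h i := mul_le_mul_of_nonpos_right hti hlt.le
          have hm2 : t * h i ≤ 0 := mul_nonpos_of_nonneg_of_nonpos htpos.le hlt.le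
          constructor <;> linarith
        · have hsv : sgn i = 1 := by simp only [hsgn, if_pos hgt]
          have hev : g i + tf i * h i = 1 := by rw [hval i hi, hsv]
          have hm : t * h i ≤ tf i * h i := mul_le_mul_of_nonneg_right hti hgt.le
          have hm2 : 0 ≤ t * h i := mul_nonneg htpos.le hgt.le
          constructor <;> linarith
    have hSsub : insert i0 S ⊆ Finset.univ.filter fun i => |g' i| = 1 := by
      intro i hi
      rcases Finset.mem_insert.1 hi with h' | h'
      · refine Finset.mem_filter.2 ⟨Finset.mem_univ _, ?_⟩
        rw [h', hg'app, ht, hval i0 hi0ne, hsgn_abs]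
      · refine Finset.mem_filter.2 ⟨Finset.mem_univ _, ?_⟩
        rw [hg'app, hhS i h', mul_zero, add_zero]
        exact (Finset.mem_filter.1 h').2
    have hi0S : i0 ∉ S := fun hc => hi0ne (hhS i0 hc)
    have hcard' : Fintype.card ι ≤ c + (Finset.univ.filter fun i => |g' i| = 1).card := by
      have h1 : S.card + 1 = (insert i0 S).card := (Finset.card_insert_of_notMem hi0S).symm
      have h2 : (insert i0 S).card ≤ (Finset.univ.filter fun i => |g' i| = 1).card :=
        Finset.card_le_card hSsub
      omega
    exact ih g' hg'V hbound hcard'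

lemma exists_sign_far {ι : Type*} [Fintype ι] (L : Submodule ℝ (ι → ℝ)) :
    ∃ ε : ι → ℝ, (∀ i, ε i = 1 ∨ ε i = -1) ∧
      ∀ y ∈ L, ((Fintype.card ι : ℝ) - Module.finrank ℝ L) ≤ ∑ i, |ε i - y i| := by
  classical
  set f := WithLp.linearEquiv 2 ℝ (ι → ℝ) with hf
  set K : Submodule ℝ (EuclideanSpace ℝ ι) := L.comap (f : EuclideanSpace ℝ ι →ₗ[ℝ] (ι → ℝ))
    with hK
  set V : Submodule ℝ (ι → ℝ) := Kᗮ.map (f : EuclideanSpace ℝ ι →ₗ[ℝ] (ι → ℝ)) with hV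
  have hrankV : (Module.finrank ℝ V : ℝ) = (Fintype.card ι : ℝ) - Module.finrank ℝ L := by
    have h1 : Module.finrank ℝ V = Module.finrank ℝ Kᗮ := LinearEquiv.finrank_map_eq f Kᗮ
    have h2 : Module.finrank ℝ K + Module.finrank ℝ Kᗮ
        = Module.finrank ℝ (EuclideanSpace ℝ ι) := K.finrank_add_finrank_orthogonal
    have h3 : Module.finrank ℝ (EuclideanSpace ℝ ι) = Fintype.card ι :=
      finrank_euclideanSpace
    have h4 : Module.finrank ℝ K = Module.finrank ℝ L := by
      rw [hK, Submodule.comap_equiv_eq_map_symm]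
      exact LinearEquiv.finrank_map_eq f.symm L
    rw [h1]
    rw [h3, h4] at h2
    push_cast [← h2]
    ring
  obtain ⟨g, hgV, hgle, hgsum⟩ := exists_sign_active V
  obtain ⟨w, hw, hwg⟩ := hgV
  refine ⟨fun i => if 0 ≤ g i then 1 else -1, fun i => by by_cases h : 0 ≤ g i <;> simp [h], ?_⟩
  intro y hy
  have horth : ∑ i, y i * g i = 0 := by
    have hyK : f.symm y ∈ K := by
      rw [hK, Submodule.mem_comap]
      simpa using hy
    have hinner : (inner ℝ (f.symm y) w : ℝ) = 0 := hw _ hyK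
    rw [PiLp.inner_apply] at hinner
    have hcoord : ∀ i, (f.symm y) i = y i := fun i => rfl
    have hcoordw : ∀ i, w i = g i := by
      intro i
      rw [← hwg]
      rfl
    simp only [RCLike.inner_apply, starRingEnd_apply, star_trivial] at hinner
    calc ∑ i, y i * g i = ∑ i, (f.symm y) i * w i := by
          refine Finset.sum_congr rfl fun i _ => ?_
          rw [hcoord, hcoordw]
      _ = 0 := by simpa only [mul_comm] using hinner
  have hkey : ∀ i, |g i| ≤ |(if 0 ≤ g i then (1:ℝ) else -1) - y i| + y i * g i := by
    intro i
    have hsg : (if 0 ≤ g i then (1:ℝ) else -1) * g i = |g i| := by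
      by_cases h : 0 ≤ g i
      · rw [if_pos h, one_mul, abs_of_nonneg h]
      · rw [if_neg h, abs_of_neg (not_le.1 h)]; ring
    have h2 : ((if 0 ≤ g i then (1:ℝ) else -1) - y i) * g i ≤ |(if 0 ≤ g i then (1:ℝ) else -1) - y i| := by
      calc ((if 0 ≤ g i then (1:ℝ) else -1) - y i) * g i
          ≤ |((if 0 ≤ g i then (1:ℝ) else -1) - y i) * g i| := le_abs_self _
        _ = |(if 0 ≤ g i then (1:ℝ) else -1) - y i| * |g i| := abs_mul _ _
        _ ≤ |(if 0 ≤ g i then (1:ℝ) else -1) - y i| * 1 :=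
            mul_le_mul_of_nonneg_left (hgle i) (abs_nonneg _)
        _ = _ := mul_one _
    nlinarith [hsg, h2]
  calc (Fintype.card ι : ℝ) - Module.finrank ℝ L = (Module.finrank ℝ V : ℝ) := hrankV.symm
    _ ≤ ∑ i, |g i| := hgsum
    _ ≤ ∑ i, (|(if 0 ≤ g i then (1:ℝ) else -1) - y i| + y i * g i) :=
        Finset.sum_le_sum fun i _ => hkey i
    _ = ∑ i, |(if 0 ≤ g i then (1:ℝ) else -1) - y i| + ∑ i, y i * g i := Finset.sum_add_distrib
    _ = ∑ i, |(if 0 ≤ g i then (1:ℝ) else -1) - y i| := by rw [horth, add_zero]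

-- mixed level
lemma mixedNorm_nonneg (p θ : ℝ≥0∞) {m k : ℕ} (x : Fin m → Fin k → ℝ) :
    0 ≤ mixedNorm p θ x := lNorm_nonneg _ _

lemma mixedNorm_holder {m k : ℕ} (hm : 0 < m) (hk : 0 < k) {p q θ σ : ℝ≥0∞}
    (hq : 1 ≤ q) (hqp : q ≤ p) (hσ : 1 ≤ σ) (hσθ : σ ≤ θ) (x : Fin m → Fin k → ℝ) :
    mixedNorm q σ x ≤ (m : ℝ) ^ (ir q - ir p) * (k : ℝ) ^ (ir σ - ir θ) * mixedNorm p θ x := by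
  haveI : Nonempty (Fin m) := ⟨⟨0, hm⟩⟩
  haveI : Nonempty (Fin k) := ⟨⟨0, hk⟩⟩
  have hm0 : (0:ℝ) < m := by exact_mod_cast hm
  have hApos : (0:ℝ) ≤ (m : ℝ) ^ (ir q - ir p) := Real.rpow_nonneg hm0.le _
  unfold mixedNorm
  calc lNorm σ (fun j => lNorm q fun i => x i j)
      ≤ lNorm σ (fun j => (m : ℝ) ^ (ir q - ir p) * lNorm p fun i => x i j) := by
        refine lNorm_mono fun j => ?_
        rw [abs_of_nonneg (lNorm_nonneg _ _),
          abs_of_nonneg (mul_nonneg hApos (lNorm_nonneg _ _))]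
        have := lNorm_holder hq hqp (fun i => x i j)
        simpa using this
    _ = (m : ℝ) ^ (ir q - ir p) * lNorm σ (fun j => lNorm p fun i => x i j) :=
        lNorm_smul hσ hApos _
    _ ≤ (m : ℝ) ^ (ir q - ir p) * ((k : ℝ) ^ (ir σ - ir θ) * lNorm θ (fun j => lNorm p fun i => x i j)) := by
        refine mul_le_mul_of_nonneg_left ?_ hApos
        have := lNorm_holder hσ hσθ (fun j => lNorm p fun i => x i j)
        simpa using this
    _ = (m : ℝ) ^ (ir q - ir p) * (k : ℝ) ^ (ir σ - ir θ) * lNorm θ (fun j => lNorm p fun i => x i j) := by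
        ring

lemma mixedNorm_smul {p θ : ℝ≥0∞} (hp : 1 ≤ p) (hθ : 1 ≤ θ) {m k : ℕ} {c : ℝ} (hc : 0 ≤ c)
    (x : Fin m → Fin k → ℝ) :
    mixedNorm p θ (fun i j => c * x i j) = c * mixedNorm p θ x := by
  unfold mixedNorm
  have h1 : (fun j => lNorm p fun i => c * x i j)
      = fun j => c * lNorm p fun i => x i j := funext fun j => lNorm_smul hp hc _
  rw [h1, lNorm_smul hθ hc]

lemma mixedNorm_sign_le {p θ : ℝ≥0∞} (hp : 1 ≤ p) (hθ : 1 ≤ θ) {m k : ℕ}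
    {e : Fin m → Fin k → ℝ} (he : ∀ i j, |e i j| = 1) :
    mixedNorm p θ e ≤ (m : ℝ) ^ (ir p) * (k : ℝ) ^ (ir θ) := by
  have hApos : (0:ℝ) ≤ (m : ℝ) ^ (ir p) := Real.rpow_nonneg (Nat.cast_nonneg m) _
  unfold mixedNorm
  calc lNorm θ (fun j => lNorm p fun i => e i j)
      ≤ lNorm θ (fun _ => (m : ℝ) ^ (ir p) * 1) := by
        refine lNorm_mono fun j => ?_
        rw [abs_of_nonneg (lNorm_nonneg _ _), mul_one, abs_of_nonneg hApos]
        have := lNorm_sign_le hp (fun i => he i j)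
        simpa using this
    _ = (m : ℝ) ^ (ir p) * lNorm θ (fun _ : Fin k => (1:ℝ)) := lNorm_smul hθ hApos _
    _ ≤ (m : ℝ) ^ (ir p) * (k : ℝ) ^ (ir θ) := by
        refine mul_le_mul_of_nonneg_left ?_ hApos
        have := lNorm_sign_le hθ (e := fun _ : Fin k => (1:ℝ)) (fun j => by norm_num)
        simpa using this

lemma mixedNorm_lower {q σ : ℝ≥0∞} (hq : 1 ≤ q) (hσ : 1 ≤ σ) {m k : ℕ}
    (hm : 0 < m) (hk : 0 < k) (z : Fin m → Fin k → ℝ) :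
    (m : ℝ) ^ (ir q - 1) * ((k : ℝ) ^ (ir σ - 1) * ∑ j, ∑ i, |z i j|)
      ≤ mixedNorm q σ z := by
  haveI : Nonempty (Fin m) := ⟨⟨0, hm⟩⟩
  haveI : Nonempty (Fin k) := ⟨⟨0, hk⟩⟩
  have h1 : ∀ j, (m : ℝ) ^ (ir q - 1) * ∑ i, |z i j| ≤ lNorm q fun i => z i j := by
    intro j
    have := sum_abs_le_lNorm hq (fun i => z i j)
    simpa using this
  have h2 : (k : ℝ) ^ (ir σ - 1) * ∑ j, |lNorm q fun i => z i j|
      ≤ lNorm σ fun j => lNorm q fun i => z i j := by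
    have := sum_abs_le_lNorm hσ (fun j => lNorm q fun i => z i j)
    simpa using this
  have h3 : ∑ j, |lNorm q fun i => z i j| = ∑ j, lNorm q fun i => z i j :=
    Finset.sum_congr rfl fun j _ => abs_of_nonneg (lNorm_nonneg _ _)
  have h4 : (m : ℝ) ^ (ir q - 1) * ∑ j, ∑ i, |z i j| ≤ ∑ j, lNorm q fun i => z i j := by
    rw [Finset.mul_sum]
    exact Finset.sum_le_sum fun j _ => h1 j
  calc (m : ℝ) ^ (ir q - 1) * ((k : ℝ) ^ (ir σ - 1) * ∑ j, ∑ i, |z i j|)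
      = (k : ℝ) ^ (ir σ - 1) * ((m : ℝ) ^ (ir q - 1) * ∑ j, ∑ i, |z i j|) := by ring
    _ ≤ (k : ℝ) ^ (ir σ - 1) * ∑ j, lNorm q fun i => z i j :=
        mul_le_mul_of_nonneg_left h4 (Real.rpow_nonneg (Nat.cast_nonneg k) _)
    _ = (k : ℝ) ^ (ir σ - 1) * ∑ j, |lNorm q fun i => z i j| := by rw [h3]
    _ ≤ _ := h2

lemma zero_mem_mixedBall {m k : ℕ} (hm : 0 < m) (hk : 0 < k) {p θ : ℝ≥0∞}
    (hp : 1 ≤ p) (hθ : 1 ≤ θ) : (0 : Fin m → Fin k → ℝ) ∈ mixedBall m k p θ := by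
  haveI : Nonempty (Fin m) := ⟨⟨0, hm⟩⟩
  haveI : Nonempty (Fin k) := ⟨⟨0, hk⟩⟩
  have h0 : mixedNorm p θ (fun (_ : Fin m) (_ : Fin k) => (0:ℝ)) = 0 := by
    have := mixedNorm_smul (m := m) (k := k) hp hθ le_rfl (fun _ _ => (0:ℝ))
    simpa using this
  show mixedNorm p θ 0 ≤ 1
  have : (0 : Fin m → Fin k → ℝ) = fun (_ : Fin m) (_ : Fin k) => (0:ℝ) := rfl
  rw [this, h0]
  norm_num


/-- There are absolute constants `c, C > 0` such that for all `1 ≤ q ≤ p ≤ ∞`,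
`1 ≤ σ ≤ θ ≤ ∞`, `m, k ≥ 1` and `0 ≤ n ≤ mk/2`,
`c ⋅ m^{1/q−1/p} k^{1/σ−1/θ} ≤ d_n(B^{m,k}_{p,θ}, l^{m,k}_{q,σ})
  ≤ C ⋅ m^{1/q−1/p} k^{1/σ−1/θ}`. -/
theorem statement6 :
    ∃ c C : ℝ, 0 < c ∧ 0 < C ∧
      ∀ (p q θ σ : ℝ≥0∞), 1 ≤ q → q ≤ p → 1 ≤ σ → σ ≤ θ →
      ∀ (m k n : ℕ), 0 < m → 0 < k → 2 * n ≤ m * k →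
        c * ((m : ℝ) ^ (ir q - ir p) * (k : ℝ) ^ (ir σ - ir θ)) ≤
            kolWidth m k n (mixedBall m k p θ) q σ ∧
          kolWidth m k n (mixedBall m k p θ) q σ ≤
            C * ((m : ℝ) ^ (ir q - ir p) * (k : ℝ) ^ (ir σ - ir θ)) := by
  refine ⟨1/2, 1, by norm_num, one_pos, ?_⟩
  intro p q θ σ hq hqp hσ hσθ m k n hm hk hn
  haveI : Nonempty (Fin m) := ⟨⟨0, hm⟩⟩
  haveI : Nonempty (Fin k) := ⟨⟨0, hk⟩⟩
  have hp : (1:ℝ≥0∞) ≤ p := le_trans hq hqp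
  have hθ1 : (1:ℝ≥0∞) ≤ θ := le_trans hσ hσθ
  have hm0 : (0:ℝ) < m := by exact_mod_cast hm
  have hk0 : (0:ℝ) < k := by exact_mod_cast hk
  set A := (m:ℝ) ^ (ir q - ir p) with hA
  set B := (k:ℝ) ^ (ir σ - ir θ) with hB
  have hApos : 0 < A := Real.rpow_pos_of_pos hm0 _
  have hBpos : 0 < B := Real.rpow_pos_of_pos hk0 _
  haveI hMne : Nonempty (mixedBall m k p θ) := ⟨⟨0, zero_mem_mixedBall hm hk hp hθ1⟩⟩
  have hinf_le_norm : ∀ (W : Submodule ℝ (Fin m → Fin k → ℝ)) (x : Fin m → Fin k → ℝ),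
      (⨅ y : W, mixedNorm q σ (x - (y : Fin m → Fin k → ℝ))) ≤ mixedNorm q σ x := by
    intro W x
    have h1 : (⨅ y : W, mixedNorm q σ (x - (y : Fin m → Fin k → ℝ)))
        ≤ mixedNorm q σ (x - ((0 : W) : Fin m → Fin k → ℝ)) :=
      ciInf_le ⟨0, by rintro v ⟨y, rfl⟩; exact mixedNorm_nonneg _ _ _⟩ (0 : W)
    simpa using h1
  have hnormball : ∀ x : mixedBall m k p θ, mixedNorm q σ (x : Fin m → Fin k → ℝ) ≤ A * B := by
    intro x
    calc mixedNorm q σ (x : Fin m → Fin k → ℝ)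
        ≤ A * B * mixedNorm p θ (x : Fin m → Fin k → ℝ) :=
          mixedNorm_holder hm hk hq hqp hσ hσθ _
      _ ≤ A * B * 1 := by
          have hx := x.2
          exact mul_le_mul_of_nonneg_left hx (by positivity)
      _ = A * B := mul_one _
  haveI : Nonempty {L : Submodule ℝ (Fin m → Fin k → ℝ) // Module.finrank ℝ L ≤ n} :=
    ⟨⟨⊥, by simp⟩⟩
  constructor
  · -- lower bound
    refine le_ciInf fun L => ?_
    haveI : Nonempty L.1 := ⟨0⟩
    set ce := LinearEquiv.curry ℝ ℝ (Fin m) (Fin k) with hce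
    set L' := L.1.comap (ce : (Fin m × Fin k → ℝ) →ₗ[ℝ] (Fin m → Fin k → ℝ)) with hL'
    have hrankL' : Module.finrank ℝ L' = Module.finrank ℝ L.1 := by
      rw [hL', Submodule.comap_equiv_eq_map_symm]
      exact LinearEquiv.finrank_map_eq ce.symm L.1
    obtain ⟨ε, hε, hfar⟩ := exists_sign_far L'
    have hεabs : ∀ z, |ε z| = 1 := fun z => by rcases hε z with h | h <;> rw [h] <;> norm_num
    have hcard : (Fintype.card (Fin m × Fin k) : ℝ) = (m:ℝ) * k := by
      simp [Fintype.card_prod]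
    set s := (m:ℝ) ^ (-(ir p)) * (k:ℝ) ^ (-(ir θ)) with hs
    have hspos : 0 < s :=
      mul_pos (Real.rpow_pos_of_pos hm0 _) (Real.rpow_pos_of_pos hk0 _)
    set x₀ : Fin m → Fin k → ℝ := fun i j => s * ε (i, j) with hx₀
    have hx₀mem : x₀ ∈ mixedBall m k p θ := by
      show mixedNorm p θ x₀ ≤ 1
      have heq : mixedNorm p θ x₀ = s * mixedNorm p θ (fun i j => ε (i, j)) :=
        mixedNorm_smul hp hθ1 hspos.le _
      rw [heq]
      calc s * mixedNorm p θ (fun i j => ε (i, j))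
          ≤ s * ((m:ℝ) ^ (ir p) * (k:ℝ) ^ (ir θ)) :=
            mul_le_mul_of_nonneg_left
              (mixedNorm_sign_le hp hθ1 (fun i j => hεabs (i, j))) hspos.le
        _ = 1 := by
            rw [hs, Real.rpow_neg hm0.le, Real.rpow_neg hk0.le]
            field_simp
    have hhalf : (m:ℝ) * k / 2 ≤ (Fintype.card (Fin m × Fin k) : ℝ) - Module.finrank ℝ L' := by
      have h1 : ((2 * n : ℕ) : ℝ) ≤ ((m * k : ℕ) : ℝ) := by exact_mod_cast hn
      have h2 : (Module.finrank ℝ L' : ℝ) ≤ (n : ℝ) := by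
        have := hrankL' ▸ L.2
        exact_mod_cast this
      rw [hcard]
      push_cast at h1
      linarith
    have hkey : ∀ y : L.1, 1/2 * (A * B) ≤ mixedNorm q σ (x₀ - (y : Fin m → Fin k → ℝ)) := by
      intro y
      set y' : Fin m × Fin k → ℝ := fun z => s⁻¹ * (y : Fin m → Fin k → ℝ) z.1 z.2 with hy'
      have hy'mem : y' ∈ L' := by
        rw [hL', Submodule.mem_comap]
        have hccy : (ce : (Fin m × Fin k → ℝ) →ₗ[ℝ] (Fin m → Fin k → ℝ)) y'
            = s⁻¹ • (y : Fin m → Fin k → ℝ) := rfl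
        rw [hccy]
        exact L.1.smul_mem _ y.2
      have hfar' := hfar y' hy'mem
      have hterm : ∀ (i : Fin m) (j : Fin k),
          |(x₀ - (y : Fin m → Fin k → ℝ)) i j| = s * |ε (i, j) - y' (i, j)| := by
        intro i j
        have hval : (x₀ - (y : Fin m → Fin k → ℝ)) i j = s * (ε (i, j) - y' (i, j)) := by
          simp only [Pi.sub_apply, hx₀, hy']
          field_simp
        rw [hval, abs_mul, abs_of_pos hspos]
      have hsum : ∑ j, ∑ i, |(x₀ - (y : Fin m → Fin k → ℝ)) i j|
          = s * ∑ z : Fin m × Fin k, |ε z - y' z| := by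
        calc ∑ j, ∑ i, |(x₀ - (y : Fin m → Fin k → ℝ)) i j|
            = ∑ j, ∑ i, s * |ε (i, j) - y' (i, j)| :=
              Finset.sum_congr rfl fun j _ => Finset.sum_congr rfl fun i _ => hterm i j
          _ = s * ∑ j, ∑ i, |ε (i, j) - y' (i, j)| := by
              simp only [← Finset.mul_sum]
          _ = s * ∑ i, ∑ j, |ε (i, j) - y' (i, j)| := by rw [Finset.sum_comm]
          _ = s * ∑ z : Fin m × Fin k, |ε z - y' z| := by rw [Fintype.sum_prod_type]
      have e1 : (m:ℝ) ^ (ir q - 1) * (m:ℝ) ^ (-(ir p)) * (m:ℝ) = A := by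
        have : (m:ℝ) ^ (ir q - 1) * (m:ℝ) ^ (-(ir p)) * (m:ℝ) ^ (1:ℝ) = A := by
          rw [← Real.rpow_add hm0, ← Real.rpow_add hm0, hA]
          congr 1
          ring
        rwa [Real.rpow_one] at this
      have e2 : (k:ℝ) ^ (ir σ - 1) * (k:ℝ) ^ (-(ir θ)) * (k:ℝ) = B := by
        have : (k:ℝ) ^ (ir σ - 1) * (k:ℝ) ^ (-(ir θ)) * (k:ℝ) ^ (1:ℝ) = B := by
          rw [← Real.rpow_add hk0, ← Real.rpow_add hk0, hB]
          congr 1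
          ring
        rwa [Real.rpow_one] at this
      calc 1/2 * (A * B)
          = (m:ℝ) ^ (ir q - 1) * ((k:ℝ) ^ (ir σ - 1) * (s * ((m:ℝ) * k / 2))) := by
            rw [← e1, ← e2, hs]
            ring
        _ ≤ (m:ℝ) ^ (ir q - 1) * ((k:ℝ) ^ (ir σ - 1)
              * (s * ((Fintype.card (Fin m × Fin k) : ℝ) - Module.finrank ℝ L'))) := by
            gcongr
        _ ≤ (m:ℝ) ^ (ir q - 1) * ((k:ℝ) ^ (ir σ - 1)
              * (s * ∑ z : Fin m × Fin k, |ε z - y' z|)) := by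
            gcongr
        _ = (m:ℝ) ^ (ir q - 1) * ((k:ℝ) ^ (ir σ - 1)
              * ∑ j, ∑ i, |(x₀ - (y : Fin m → Fin k → ℝ)) i j|) := by rw [hsum]
        _ ≤ mixedNorm q σ (x₀ - (y : Fin m → Fin k → ℝ)) :=
            mixedNorm_lower hq hσ hm hk _
    have hbddsup : BddAbove (Set.range fun x : mixedBall m k p θ =>
        ⨅ y : L.1, mixedNorm q σ ((x : Fin m → Fin k → ℝ) - (y : Fin m → Fin k → ℝ))) := by
      refine ⟨A * B, ?_⟩
      rintro v ⟨x, rfl⟩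
      exact le_trans (hinf_le_norm L.1 _) (hnormball x)
    have hle1 : 1/2 * (A * B) ≤ ⨅ y : L.1, mixedNorm q σ (x₀ - (y : Fin m → Fin k → ℝ)) :=
      le_ciInf hkey
    exact le_trans hle1 (le_ciSup hbddsup ⟨x₀, hx₀mem⟩)
  · -- upper bound
    have hub : ∀ (L : {L : Submodule ℝ (Fin m → Fin k → ℝ) // Module.finrank ℝ L ≤ n}),
        0 ≤ ⨆ x : mixedBall m k p θ,
          ⨅ y : L.1, mixedNorm q σ ((x : Fin m → Fin k → ℝ) - (y : Fin m → Fin k → ℝ)) :=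
      fun L => Real.iSup_nonneg fun x => Real.iInf_nonneg fun y => mixedNorm_nonneg _ _ _
    have hbdd : BddBelow (Set.range fun L : {L : Submodule ℝ (Fin m → Fin k → ℝ) //
        Module.finrank ℝ L ≤ n} => ⨆ x : mixedBall m k p θ,
          ⨅ y : L.1, mixedNorm q σ ((x : Fin m → Fin k → ℝ) - (y : Fin m → Fin k → ℝ))) :=
      ⟨0, by rintro v ⟨L, rfl⟩; exact hub L⟩
    have h1 : kolWidth m k n (mixedBall m k p θ) q σ
        ≤ ⨆ x : mixedBall m k p θ, ⨅ y : ((⊥ : Submodule ℝ (Fin m → Fin k → ℝ)) :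
            Submodule ℝ (Fin m → Fin k → ℝ)),
            mixedNorm q σ ((x : Fin m → Fin k → ℝ) - (y : Fin m → Fin k → ℝ)) :=
      ciInf_le hbdd ⟨⊥, by simp⟩
    have h2 : (⨆ x : mixedBall m k p θ, ⨅ y : ((⊥ : Submodule ℝ (Fin m → Fin k → ℝ)) :
          Submodule ℝ (Fin m → Fin k → ℝ)),
          mixedNorm q σ ((x : Fin m → Fin k → ℝ) - (y : Fin m → Fin k → ℝ))) ≤ A * B :=
      Real.iSup_le (fun x => le_trans (hinf_le_norm _ _) (hnormball x)) (by positivity)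
    rw [one_mul]
    exact le_trans h1 h2

end
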